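/- arXiv:1606.08349 — 3 statements merged into one kernel-verified Lean document; each statement's English description precedes it below -/
import Mathlib

section
/- Let A be a Banach algebra, φ a character on A, and suppose A is approximately φ-inner amenable. If the second dual A** (with an Arens product) is approximately biflat, then A is approximately left φ-amenable. -/
set_option synthInstance.maxHeartbeats 1000000
set_option maxHeartbeats 4000000
set_option maxSynthPendingDepth 3
set_option linter.unusedSectionVars false
set_option linter.unusedVariables false
open scoped Topology
open Filter ContinuousLinearMap

noncomputable section

namespace ApproxBiflat

variable (A : Type*) [NonUnitalNormedRing A] [NormedSpace ℂ A]
  [IsScalarTower ℂ A A] [SMulCommClass ℂ A A]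

/-- The dual space `A*` of a Banach algebra `A`. -/
abbrev Dual' := A →L[ℂ] ℂ

/-- Bounded bilinear forms on `A × A`; this is the canonical isometric model of the dual
`(A ⊗_p A)*` of the projective tensor product `A ⊗_p A`. -/
abbrev BilForm := A →L[ℂ] A →L[ℂ] ℂ

/-- The canonical model of the second dual `(A ⊗_p A)**` of the projective tensor product. -/
abbrev TensorBidual := (A →L[ℂ] A →L[ℂ] ℂ) →L[ℂ] ℂ

/-- The bidual of a Banach algebra, as a Banach space. -/
abbrev Bidual := (A →L[ℂ] ℂ) →L[ℂ] ℂ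

variable {A}

/-- The left action of `A` on `A* = (A →L ℂ)`: `(a · f) x = f (x * a)`. -/
def dualLeft (a : A) : Dual' A →L[ℂ] Dual' A :=
  (compL ℂ A A ℂ).flip ((ContinuousLinearMap.mul ℂ A).flip a)

/-- The right action of `A` on `A*`: `(f · a) x = f (a * x)`. -/
def dualRight (a : A) : Dual' A →L[ℂ] Dual' A :=
  (compL ℂ A A ℂ).flip (ContinuousLinearMap.mul ℂ A a)

@[simp] lemma dualLeft_apply (a : A) (f : Dual' A) (x : A) : dualLeft a f x = f (x * a) := rfl
@[simp] lemma dualRight_apply (a : A) (f : Dual' A) (x : A) : dualRight a f x = f (a * x) := rfl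

/-- The adjoint `π* : A* → (A ⊗_p A)*` of the multiplication map
`π : A ⊗_p A → A`, in the bilinear-form model: `(π* f) a b = f (a * b)`. -/
def piStar : Dual' A →L[ℂ] BilForm A :=
  ((compL ℂ A (A →L[ℂ] A) (A →L[ℂ] ℂ)).flip (ContinuousLinearMap.mul ℂ A)).comp
    (compL ℂ A A ℂ)

@[simp] lemma piStar_apply (f : Dual' A) (a b : A) : piStar f a b = f (a * b) := rfl

/-- The left action of `A` on `(A ⊗_p A)*`: `(a · T) b c = T b (c * a)`. -/
def bilLeft (a : A) : BilForm A →L[ℂ] BilForm A :=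
  compL ℂ A (A →L[ℂ] ℂ) (A →L[ℂ] ℂ) (dualLeft a)

/-- The right action of `A` on `(A ⊗_p A)*`: `(T · a) b c = T (a * b) c`. -/
def bilRight (a : A) : BilForm A →L[ℂ] BilForm A :=
  (compL ℂ A A (A →L[ℂ] ℂ)).flip (ContinuousLinearMap.mul ℂ A a)

@[simp] lemma bilLeft_apply (a : A) (T : BilForm A) (b c : A) :
    bilLeft a T b c = T b (c * a) := rfl
@[simp] lemma bilRight_apply (a : A) (T : BilForm A) (b c : A) :
    bilRight a T b c = T (a * b) c := rfl

/-- The left action of `A` on `(A ⊗_p A)**`: `a · m = m ∘ (T ↦ T · a)`. -/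
def tbLeft (a : A) (m : TensorBidual A) : TensorBidual A := m.comp (bilRight a)

/-- The right action of `A` on `(A ⊗_p A)**`: `m · a = m ∘ (T ↦ a · T)`. -/
def tbRight (m : TensorBidual A) (a : A) : TensorBidual A := m.comp (bilLeft a)

/-- The elementary tensor `a ⊗ b`, viewed canonically inside `(A ⊗_p A)**`. -/
def dyad (a b : A) : TensorBidual A :=
  (ContinuousLinearMap.apply ℂ ℂ b).comp (ContinuousLinearMap.apply ℂ (A →L[ℂ] ℂ) a)

@[simp] lemma dyad_apply (a b : A) (T : BilForm A) : dyad a b T = T a b := rfl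

variable (A) in
/-- The canonical isometric image of the projective tensor product `A ⊗_p A` inside its bidual
`(A ⊗_p A)**`: the closure of the linear span of the elementary tensors. -/
def tensorSpan : Submodule ℂ (TensorBidual A) :=
  (Submodule.span ℂ {m : TensorBidual A | ∃ a b : A, m = dyad a b}).topologicalClosure

/-- The double adjoint `π** : (A ⊗_p A)** → A**` of the multiplication map. -/
def piStarStar (m : TensorBidual A) : Bidual A := m.comp piStar

/-- `ρ : (A ⊗_p A)* → A*` is a morphism of Banach `A`-bimodules. -/
def IsBimodMorphism (ρ : BilForm A →L[ℂ] Dual' A) : Prop :=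
  ∀ (a : A) (T : BilForm A),
    ρ (bilLeft a T) = dualLeft a (ρ T) ∧ ρ (bilRight a T) = dualRight a (ρ T)

variable (A)

/-- A Banach algebra `A` is **biflat** if there is a bounded `A`-bimodule morphism
`ρ : (A ⊗_p A)* → A*` with `ρ ∘ π* = id`. -/
def Biflat : Prop :=
  ∃ ρ : BilForm A →L[ℂ] Dual' A, IsBimodMorphism ρ ∧ ∀ f : Dual' A, ρ (piStar f) = f

/-- A Banach algebra `A` is **approximately biflat** if there is a net `(ρ_α)` of bounded
`A`-bimodule morphisms `(A ⊗_p A)* → A*` with `ρ_α ∘ π* → id_{A*}` in the weak-star operator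
topology.  (Nets are encoded by filters in the standard way.) -/
def ApproximatelyBiflat : Prop :=
  ∃ l : Filter (BilForm A →L[ℂ] Dual' A), l.NeBot ∧
    (∀ᶠ ρ in l, IsBimodMorphism ρ) ∧
    ∀ (f : Dual' A) (a : A), Tendsto (fun ρ => ρ (piStar f) a) l (𝓝 (f a))

/-- A Banach algebra `A` is **pseudo-amenable** if there is a net `(m_α)` in `A ⊗_p A`
(realized isometrically inside `(A ⊗_p A)**` as `tensorSpan A`) such that
`a · m_α - m_α · a → 0` and `π(m_α) a → a` for every `a ∈ A`. -/
def PseudoAmenable : Prop :=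
  ∃ l : Filter (TensorBidual A), l.NeBot ∧
    (∀ᶠ m in l, m ∈ tensorSpan A) ∧
    (∀ a : A, Tendsto (fun m => tbLeft a m - tbRight m a) l (𝓝 0)) ∧
    ∀ a : A, Tendsto (fun m => (piStarStar m).comp (dualLeft a)) l
      (𝓝 (NormedSpace.inclusionInDoubleDual ℂ A a))

/-- `A` has a (two-sided, not necessarily bounded) approximate identity. -/
def HasApproximateIdentity : Prop :=
  ∃ l : Filter A, l.NeBot ∧
    ∀ a : A, Tendsto (fun e => a * e) l (𝓝 a) ∧ Tendsto (fun e => e * a) l (𝓝 a)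

end ApproxBiflat
namespace ApproxBiflat

section Arens

variable {A : Type*} [NonUnitalNormedRing A] [NormedSpace ℂ A]
  [IsScalarTower ℂ A A] [SMulCommClass ℂ A A]

/-- The auxiliary map of the first Arens product: for `G ∈ A**`,
`arensAux G : A* → A*` is `f ↦ G ⋄ f`, where `(G ⋄ f) (a) = G (f · a)` and `(f · a) b = f (a b)`. -/
def arensAux (G : Bidual A) : Dual' A →L[ℂ] Dual' A :=
  (compL ℂ A (A →L[ℂ] ℂ) ℂ G).comp piStar

@[simp] lemma arensAux_apply (G : Bidual A) (f : Dual' A) (a : A) :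
    arensAux G f a = G (piStar f a) := rfl

/-- The first Arens product on the bidual `A**`: `(F □ G) (f) = F (G ⋄ f)`. -/
instance : Mul (Bidual A) := ⟨fun F G => F.comp (arensAux G)⟩

lemma arens_mul_apply (F G : Bidual A) (f : Dual' A) : (F * G) f = F (arensAux G f) := rfl

private lemma arensAux_add (G H : Bidual A) : arensAux (G + H) = arensAux G + arensAux H := by
  ext f a; simp

private lemma arensAux_smul (c : ℂ) (G : Bidual A) : arensAux (c • G) = c • arensAux G := by
  ext f a; simp

private lemma piStar_mul' (f : Dual' A) (a b : A) :
    piStar f (a * b) = piStar (piStar f a) b := by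
  ext c; simp [mul_assoc]

noncomputable instance : NonUnitalRing (Bidual A) :=
  { (inferInstance : AddCommGroup (Bidual A)) with
    mul := (· * ·)
    left_distrib := fun F G H => by
      ext f; simp [arens_mul_apply, arensAux_add]
    right_distrib := fun F G H => by
      ext f; simp [arens_mul_apply]
    zero_mul := fun F => by ext f; simp [arens_mul_apply]
    mul_zero := fun F => by
      ext f
      have : arensAux (0 : Bidual A) = 0 := by ext g a; simp
      simp [arens_mul_apply, this]
    mul_assoc := fun F G H => by
      ext f
      have key : arensAux G (arensAux H f) = arensAux (G * H) f := by
        ext a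
        have : piStar (arensAux H f) a = arensAux H (piStar f a) := by
          ext b; simp [piStar_mul']
        simp [this, arens_mul_apply]
      simp [arens_mul_apply, key] }

private lemma norm_piStar_app_le (f : Dual' A) (a : A) : ‖piStar f a‖ ≤ ‖f‖ * ‖a‖ := by
  refine ContinuousLinearMap.opNorm_le_bound _ (by positivity) fun b => ?_
  calc ‖f (a * b)‖ ≤ ‖f‖ * ‖a * b‖ := f.le_opNorm _
    _ ≤ ‖f‖ * (‖a‖ * ‖b‖) := by
        have := norm_mul_le a b
        have h0 : (0:ℝ) ≤ ‖f‖ := norm_nonneg _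
        nlinarith
    _ = ‖f‖ * ‖a‖ * ‖b‖ := by ring

private lemma norm_piStar_le' (f : Dual' A) : ‖piStar (A := A) f‖ ≤ ‖f‖ := by
  refine ContinuousLinearMap.opNorm_le_bound _ (norm_nonneg f) fun a => norm_piStar_app_le f a

private lemma norm_arensAux_le (G : Bidual A) : ‖arensAux G‖ ≤ ‖G‖ := by
  refine ContinuousLinearMap.opNorm_le_bound _ (norm_nonneg G) fun f => ?_
  have h1 : ‖arensAux G f‖ ≤ ‖G‖ * ‖piStar (A := A) f‖ := by
    exact ContinuousLinearMap.opNorm_comp_le G (piStar (A := A) f)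
  calc ‖arensAux G f‖ ≤ ‖G‖ * ‖piStar (A := A) f‖ := h1
    _ ≤ ‖G‖ * ‖f‖ := by
        have := norm_piStar_le' f
        have h0 : (0:ℝ) ≤ ‖G‖ := norm_nonneg _
        nlinarith

noncomputable instance : NonUnitalNormedRing (Bidual A) :=
  { (inferInstance : NormedAddCommGroup (Bidual A)),
    (inferInstance : NonUnitalRing (Bidual A)) with
    norm_mul_le := fun F G => by
      calc ‖F * G‖ ≤ ‖F‖ * ‖arensAux G‖ := ContinuousLinearMap.opNorm_comp_le _ _
        _ ≤ ‖F‖ * ‖G‖ := by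
            have := norm_arensAux_le G
            have h0 : (0:ℝ) ≤ ‖F‖ := norm_nonneg _
            nlinarith }

instance : IsScalarTower ℂ (Bidual A) (Bidual A) :=
  ⟨fun c F G => by
    show (c • F) * G = c • (F * G)
    ext f; simp [arens_mul_apply]⟩

instance : SMulCommClass ℂ (Bidual A) (Bidual A) :=
  ⟨fun c F G => by
    show c • (F * G) = F * (c • G)
    ext f; simp [arens_mul_apply, arensAux_smul]⟩

end Arens

end ApproxBiflat
namespace ApproxBiflat

section Characters

variable {A : Type*} [NonUnitalNormedRing A] [NormedSpace ℂ A]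
  [IsScalarTower ℂ A A] [SMulCommClass ℂ A A]

/-- A character on a Banach algebra: a non-zero multiplicative linear functional.
(Multiplicative linear functionals on Banach algebras are automatically continuous.) -/
def IsCharacter (φ : A →L[ℂ] ℂ) : Prop :=
  φ ≠ 0 ∧ ∀ a b : A, φ (a * b) = φ a * φ b

/-- `A` is approximately `φ`-inner amenable: there is a net `(a_α)` in `A` with
`a • a_α - a_α • a → 0` and `φ(a_α) → 1` for all `a ∈ A`. -/
def ApproximatelyPhiInnerAmenable (φ : A →L[ℂ] ℂ) : Prop :=
  ∃ l : Filter A, l.NeBot ∧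
    (∀ a : A, Filter.Tendsto (fun u => a * u - u * a) l (𝓝 0)) ∧
    Filter.Tendsto (fun u => φ u) l (𝓝 1)

/-- `A` is approximately left `φ`-amenable: there is a net `(m_α)` in `A` with
`a m_α - φ(a) m_α → 0` and `φ(m_α) → 1` for all `a ∈ A`. -/
def ApproximatelyLeftPhiAmenable (φ : A →L[ℂ] ℂ) : Prop :=
  ∃ l : Filter A, l.NeBot ∧
    (∀ a : A, Filter.Tendsto (fun u => a * u - φ a • u) l (𝓝 0)) ∧
    Filter.Tendsto (fun u => φ u) l (𝓝 1)

/-- `A` is left `φ`-amenable: there is `m ∈ A**` with `a · m = φ(a) m` for all `a ∈ A` and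
`φ̃(m) = 1`, where `φ̃` is the canonical extension of `φ` to `A**` and `a · m` is the canonical
left `A`-module action on `A** = (A*)*`, i.e. `(a · m)(f) = m (f · a)`. -/
def LeftPhiAmenable (φ : A →L[ℂ] ℂ) : Prop :=
  ∃ m : Bidual A, (∀ a : A, m.comp (dualRight a) = φ a • m) ∧ m φ = 1

end Characters

end ApproxBiflat
namespace ApproxBiflat
section Aux

variable {A : Type*} [NonUnitalNormedRing A] [NormedSpace ℂ A]
  [IsScalarTower ℂ A A] [SMulCommClass ℂ A A]

local notation "κA" => NormedSpace.inclusionInDoubleDual ℂ A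

lemma kappa_apply (x : A) (f : Dual' A) : κA x f = f x := rfl

variable (φ : A →L[ℂ] ℂ)

/-- The canonical extension of `φ` to the bidual. -/
def phiT : Dual' (Bidual A) := NormedSpace.inclusionInDoubleDual ℂ (Dual' A) φ

@[simp] lemma phiT_apply (F : Bidual A) : phiT φ F = F φ := rfl

variable (hm : ∀ a b : A, φ (a * b) = φ a * φ b)

include hm

lemma piStar_char (a : A) : piStar φ a = φ a • φ := by
  ext b; simp [hm]

lemma arensAux_char (G : Bidual A) : arensAux G φ = (G φ) • φ := by
  ext a; simp [piStar_char φ hm, mul_comm]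

lemma arens_char (F G : Bidual A) : (F * G) φ = F φ * G φ := by
  rw [arens_mul_apply, arensAux_char φ hm, map_smul]
  simp [mul_comm]

omit hm

lemma kappa_mul (x y : A) : κA (x * y) = κA x * κA y := by
  ext f
  rw [arens_mul_apply]
  rfl

end Aux
section Aux2

variable {A : Type*} [NonUnitalNormedRing A] [NormedSpace ℂ A]
  [IsScalarTower ℂ A A] [SMulCommClass ℂ A A]

local notation "κA" => NormedSpace.inclusionInDoubleDual ℂ A

variable (φ : A →L[ℂ] ℂ)

/-- The elementary bilinear form `(F, G) ↦ F(g) ⬝ G(φ)` on the bidual. -/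
def Psi (g : Dual' A) : BilForm (Bidual A) :=
  (ContinuousLinearMap.apply ℂ ℂ g).smulRight (phiT φ)

@[simp] lemma Psi_apply (g : Dual' A) (F G : Bidual A) :
    Psi φ g F G = F g * G φ := by
  simp [Psi, phiT, smul_eq_mul]

lemma Psi_add (g g' : Dual' A) : Psi φ (g + g') = Psi φ g + Psi φ g' := by
  ext F G; simp; ring

lemma Psi_smul (c : ℂ) (g : Dual' A) : Psi φ (c • g) = c • Psi φ g := by
  ext F G; simp; ring

variable (hm : ∀ a b : A, φ (a * b) = φ a * φ b)
include hm

lemma Psi_phi : Psi φ φ = piStar (phiT φ) := by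
  ext F G
  simp [arens_char φ hm]

lemma bilLeft_Psi (b : Bidual A) (g : Dual' A) :
    bilLeft b (Psi φ g) = (b φ) • Psi φ g := by
  ext F G
  simp [arens_char φ hm]
  ring

lemma bilRight_piStar_char (b : Bidual A) :
    bilRight b (piStar (phiT φ)) = (b φ) • piStar (phiT φ) := by
  ext F G
  simp [arens_char φ hm]
  ring

omit hm

lemma bilRight_Psi_kappa (a : A) (g : Dual' A) :
    bilRight (κA a) (Psi φ g) = Psi φ (dualRight a g) := by
  ext F G
  have h1 : (κA a * F) g = F (dualRight a g) := by
    rw [arens_mul_apply, kappa_apply, arensAux_apply]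
    rfl
  simp [h1]

end Aux2
section Aux3

variable {A : Type*} [NonUnitalNormedRing A] [NormedSpace ℂ A]
  [IsScalarTower ℂ A A] [SMulCommClass ℂ A A]

local notation "κA" => NormedSpace.inclusionInDoubleDual ℂ A

variable (φ : A →L[ℂ] ℂ) (hm : ∀ a b : A, φ (a * b) = φ a * φ b)
include hm

lemma bilLeft_piStar_char (b : Bidual A) :
    bilLeft b (piStar (phiT φ)) = (b φ) • piStar (phiT φ) := by
  ext F G
  simp [arens_char φ hm]
  ring

variable (ρ : BilForm (Bidual A) →L[ℂ] Dual' (Bidual A)) (hρ : IsBimodMorphism ρ)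
include hρ

lemma eta_right (x a : A) :
    ρ (piStar (phiT φ)) (κA (x * a)) = φ a * ρ (piStar (phiT φ)) (κA x) := by
  have h1 : dualLeft (κA a) (ρ (piStar (phiT φ))) = φ a • ρ (piStar (phiT φ)) := by
    rw [← (hρ (κA a) (piStar (phiT φ))).1, bilLeft_piStar_char φ hm, map_smul]
    rfl
  calc ρ (piStar (phiT φ)) (κA (x * a))
      = dualLeft (κA a) (ρ (piStar (phiT φ))) (κA x) := by rw [kappa_mul]; rfl
    _ = φ a * ρ (piStar (phiT φ)) (κA x) := by rw [h1]; rfl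

lemma eta_left (x a : A) :
    ρ (piStar (phiT φ)) (κA (a * x)) = φ a * ρ (piStar (phiT φ)) (κA x) := by
  have h1 : dualRight (κA a) (ρ (piStar (phiT φ))) = φ a • ρ (piStar (phiT φ)) := by
    rw [← (hρ (κA a) (piStar (phiT φ))).2, bilRight_piStar_char φ hm, map_smul]
    rfl
  calc ρ (piStar (phiT φ)) (κA (a * x))
      = dualRight (κA a) (ρ (piStar (phiT φ))) (κA x) := by rw [kappa_mul]; rfl
    _ = φ a * ρ (piStar (phiT φ)) (κA x) := by rw [h1]; rfl

lemma hg_right (g : Dual' A) (x : Bidual A) (a : A) :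
    ρ (Psi φ g) (x * κA a) = φ a * ρ (Psi φ g) x := by
  have h1 : dualLeft (κA a) (ρ (Psi φ g)) = φ a • ρ (Psi φ g) := by
    rw [← (hρ (κA a) (Psi φ g)).1, bilLeft_Psi φ hm, map_smul]
    rfl
  calc ρ (Psi φ g) (x * κA a) = dualLeft (κA a) (ρ (Psi φ g)) x := rfl
    _ = φ a * ρ (Psi φ g) x := by rw [h1]; rfl

omit hm

lemma hg_pair (g : Dual' A) (a w : A) :
    ρ (Psi φ (dualRight a g)) (κA w) = ρ (Psi φ g) (κA (a * w)) := by
  rw [← bilRight_Psi_kappa, (hρ (κA a) (Psi φ g)).2, kappa_mul]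
  rfl

end Aux3
section Aux4

variable {A : Type*} [NonUnitalNormedRing A] [NormedSpace ℂ A]
  [IsScalarTower ℂ A A] [SMulCommClass ℂ A A]

local notation "κA" => NormedSpace.inclusionInDoubleDual ℂ A

lemma Psi_zero (φ : A →L[ℂ] ℂ) : Psi φ (0 : Dual' A) = 0 := by
  ext F G; simp

/-- `Psi` as a linear map. -/
def PsiL (φ : A →L[ℂ] ℂ) : Dual' A →ₗ[ℂ] BilForm (Bidual A) where
  toFun := Psi φ
  map_add' := Psi_add φ
  map_smul' := Psi_smul φ

lemma key_step (φ : A →L[ℂ] ℂ) (hm : ∀ a b : A, φ (a * b) = φ a * φ b)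
    (hinner : ApproximatelyPhiInnerAmenable φ)
    (hbiflat : ApproximatelyBiflat (Bidual A)) (S : Finset A) (ε : ℝ) (hε : 0 < ε) :
    ∃ v : A, (∀ a ∈ S, ‖a * v - φ a • v‖ ≤ ε) ∧ ‖φ v - 1‖ ≤ ε := by
  classical
  by_contra hcon
  push_neg at hcon
  -- the affine test map
  let T : A →L[ℂ] ((↥S → A) × ℂ) :=
    (ContinuousLinearMap.pi fun a : ↥S =>
      ContinuousLinearMap.mul ℂ A (a : A) - φ (a : A) • ContinuousLinearMap.id ℂ A).prod φ
  have hT1 : ∀ (v : A) (a : ↥S), (T v).1 a = (a : A) * v - φ (a : A) • v := fun v a => rfl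
  have hT2 : ∀ v : A, (T v).2 = φ v := fun v => rfl
  set M := (LinearMap.range (T : A →ₗ[ℂ] ((↥S → A) × ℂ))).topologicalClosure with hM
  have hTmem : ∀ v, T v ∈ M :=
    fun v => Submodule.le_topologicalClosure _ ⟨v, rfl⟩
  have hx0 : ((0, 1) : (↥S → A) × ℂ) ∉ M := by
    intro hmem
    have hcl : ((0, 1) : (↥S → A) × ℂ) ∈ closure (Set.range T) := by
      have : (M : Set ((↥S → A) × ℂ)) = closure (Set.range T) := by
        rw [hM, Submodule.topologicalClosure_coe]
        congr 1
      rw [← this]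
      exact hmem
    rcases Metric.mem_closure_iff.1 hcl ε hε with ⟨y, ⟨v, rfl⟩, hy⟩
    have hd : dist (T v) ((0, 1) : (↥S → A) × ℂ) < ε := by
      rw [dist_comm]; exact hy
    have hd1 : ∀ a ∈ S, ‖a * v - φ a • v‖ ≤ ε := by
      intro a' ha'
      set a : ↥S := ⟨a', ha'⟩ with hadef
      show ‖(a : A) * v - φ (a : A) • v‖ ≤ ε
      have h1 : dist ((T v).1 a) ((0 : ↥S → A) a) ≤ dist (T v).1 (0 : ↥S → A) :=
        dist_le_pi_dist _ _ a
      have h2 : dist (T v).1 (0 : ↥S → A) ≤ dist (T v) ((0, 1) : (↥S → A) × ℂ) := by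
        rw [Prod.dist_eq]; exact le_max_left _ _
      have h3 := (h1.trans h2).trans hd.le
      rwa [hT1, Pi.zero_apply, dist_zero_right] at h3
    have hd2 : ‖φ v - 1‖ ≤ ε := by
      have h2 : dist (T v).2 (1 : ℂ) ≤ dist (T v) ((0, 1) : (↥S → A) × ℂ) := by
        rw [Prod.dist_eq]; exact le_max_right _ _
      have h3 := h2.trans hd.le
      rwa [hT2, dist_eq_norm] at h3
    exact absurd hd2 (not_le.2 (hcon v hd1))
  -- Hahn-Banach separation
  have hclosed : IsClosed ((M.restrictScalars ℝ : Submodule ℝ _) : Set ((↥S → A) × ℂ)) := by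
    rw [Submodule.coe_restrictScalars, hM]
    exact Submodule.isClosed_topologicalClosure _
  have hx0' : ((0, 1) : (↥S → A) × ℂ) ∉ ((M.restrictScalars ℝ : Submodule ℝ _) : Set ((↥S → A) × ℂ)) := by
    rw [Submodule.coe_restrictScalars]
    exact hx0
  obtain ⟨f, u, hfM, hfx⟩ :=
    geometric_hahn_banach_closed_point (M.restrictScalars ℝ).convex hclosed hx0'
  have hf0 : ∀ y ∈ M, f y = 0 := by
    intro y hy
    by_contra hne
    have hall : ∀ t : ℝ, t * f y < u := by
      intro t
      have hmem : (t : ℂ) • y ∈ M := M.smul_mem _ hy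
      have h := hfM _ hmem
      rwa [Complex.coe_smul, map_smul, smul_eq_mul] at h
    have h := hall ((u + 1) / f y)
    rw [div_mul_cancel₀ _ hne] at h
    linarith
  have hu : 0 < u := by
    have h0 := hfM 0 M.zero_mem
    rw [map_zero] at h0
    exact h0
  -- complexification
  let g0 : ((↥S → A) × ℂ) →L[ℂ] ℂ := f.extendTo𝕜'
  have hg0 : ∀ y, g0 y = (f y : ℂ) - Complex.I * (f (Complex.I • y) : ℂ) := by
    intro y
    show StrongDual.extendRCLike (𝕜 := ℂ) f y = _
    rw [ContinuousLinearMap.extendTo𝕜'_apply]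
    norm_num
  have hg0M : ∀ y ∈ M, g0 y = 0 := by
    intro y hy
    rw [hg0, hf0 y hy, hf0 _ (M.smul_mem Complex.I hy)]
    simp
  have hg0x : g0 ((0, 1) : (↥S → A) × ℂ) ≠ 0 := by
    intro h
    have : (g0 ((0, 1) : (↥S → A) × ℂ)).re = 0 := by rw [h]; simp
    rw [hg0] at this
    simp at this
    linarith
  set c := g0 ((0, 1) : (↥S → A) × ℂ) with hc
  let g : ((↥S → A) × ℂ) →L[ℂ] ℂ := c⁻¹ • g0
  have hgM : ∀ y ∈ M, g y = 0 := by
    intro y hy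
    show c⁻¹ • g0 y = 0
    rw [hg0M y hy, smul_zero]
  have hgx : g ((0, 1) : (↥S → A) × ℂ) = 1 := by
    show c⁻¹ • g0 _ = 1
    rw [← hc, smul_eq_mul, inv_mul_cancel₀ hg0x]
  -- component functionals
  let e : ↥S → (A →L[ℂ] ((↥S → A) × ℂ)) := fun a =>
    (ContinuousLinearMap.pi fun i : ↥S =>
      if i = a then ContinuousLinearMap.id ℂ A else 0).prod 0
  have he1 : ∀ (a i : ↥S) (v : A), (e a v).1 i = if i = a then v else 0 := by
    intro a i v
    show (if i = a then ContinuousLinearMap.id ℂ A else 0) v = _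
    by_cases h : i = a <;> simp [h]
  have he2 : ∀ (a : ↥S) (v : A), (e a v).2 = 0 := fun a v => rfl
  let gA : ↥S → Dual' A := fun a => g.comp (e a)
  -- decomposition of g
  have hdec : ∀ (x : ↥S → A) (z : ℂ), g (x, z) = (∑ a : ↥S, gA a (x a)) + z * g ((0, 1)) := by
    intro x z
    have hxz : ((x, z) : (↥S → A) × ℂ) = (∑ a : ↥S, e a (x a)) + z • ((0, 1) : (↥S → A) × ℂ) := by
      refine Prod.ext ?_ ?_
      · funext i
        have : (∑ a : ↥S, e a (x a)).1 i = ∑ a : ↥S, (e a (x a)).1 i := by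
          simp [Prod.fst_sum, Finset.sum_apply]
        simp only [Prod.fst_add, Pi.add_apply, this, he1]
        rw [Finset.sum_ite_eq Finset.univ i (fun a => x a)]
        simp
      · simp [Prod.snd_sum, he2]
    rw [hxz, map_add, map_sum, map_smul, smul_eq_mul]
    rfl
  -- the separation identity
  have hstar : ∀ v : A, (∑ a : ↥S, gA a ((a : A) * v - φ (a : A) • v)) + φ v = 0 := by
    intro v
    have h0 : g (T v) = 0 := hgM _ (hTmem v)
    have h1 : g (T v) = (∑ a : ↥S, gA a ((a : A) * v - φ (a : A) • v)) + φ v * 1 := by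
      have : (T v : (↥S → A) × ℂ) = ((fun a : ↥S => (a : A) * v - φ (a : A) • v), φ v) := rfl
      rw [this, hdec, hgx]
    rw [h1, mul_one] at h0
    exact h0
  have hTheta : (∑ a : ↥S, (dualRight (a : A) (gA a) - φ (a : A) • gA a)) + φ = 0 := by
    ext v
    have := hstar v
    simp only [ContinuousLinearMap.add_apply, ContinuousLinearMap.coe_sum',
      Finset.sum_apply, ContinuousLinearMap.sub_apply, ContinuousLinearMap.smul_apply,
      dualRight_apply, smul_eq_mul, ContinuousLinearMap.zero_apply]
    rw [← this]
    congr 1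
    refine Finset.sum_congr rfl fun a _ => ?_
    rw [map_sub, map_smul, smul_eq_mul]
  -- the filters
  obtain ⟨lA, hlA, hcommut, hφ1⟩ := hinner
  obtain ⟨lR, hlR, hbim, hconv⟩ := hbiflat
  haveI := hlA
  haveI := hlR
  obtain ⟨v₀, hv₀⟩ : ∃ v, dist (φ v) 1 < 1 / 2 :=
    ((Metric.tendsto_nhds.mp hφ1) (1 / 2) (by norm_num)).exists
  -- for every bimodule morphism, the key functional vanishes at v₀
  have hzero : ∀ ρ : BilForm (Bidual A) →L[ℂ] Dual' (Bidual A), IsBimodMorphism ρ →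
      ρ (piStar (phiT φ)) (κA v₀) = 0 := by
    intro ρ hρ
    have hid : ∀ w : A, ρ (piStar (phiT φ)) (κA w)
        = -∑ a : ↥S, ((ρ (Psi φ (gA a))).comp κA) ((a : A) * w - w * (a : A)) := by
      intro w
      have happ : ρ (Psi φ ((∑ a : ↥S, (dualRight (a : A) (gA a) - φ (a : A) • gA a)) + φ))
          (κA w) = 0 := by
        rw [hTheta, Psi_zero]
        simp
      have hexp : Psi φ ((∑ a : ↥S, (dualRight (a : A) (gA a) - φ (a : A) • gA a)) + φ)
          = (∑ a : ↥S, (Psi φ (dualRight (a : A) (gA a)) - φ (a : A) • Psi φ (gA a)))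
            + Psi φ φ := by
        rw [show ∀ x y : Dual' A, Psi φ (x + y) = Psi φ x + Psi φ y from Psi_add φ]
        congr 1
        rw [show Psi φ (∑ a : ↥S, (dualRight (a : A) (gA a) - φ (a : A) • gA a))
            = PsiL φ (∑ a : ↥S, (dualRight (a : A) (gA a) - φ (a : A) • gA a)) from rfl,
          map_sum]
        refine Finset.sum_congr rfl fun a _ => ?_
        rw [map_sub, map_smul]
        rfl
      rw [hexp] at happ
      rw [map_add, map_sum] at happ
      simp only [ContinuousLinearMap.add_apply, ContinuousLinearMap.coe_sum',
        Finset.sum_apply, map_sub, ContinuousLinearMap.sub_apply, map_smul,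
        ContinuousLinearMap.smul_apply, smul_eq_mul] at happ
      have hterm : ∀ a : ↥S,
          ρ (Psi φ (dualRight (a : A) (gA a))) (κA w) - φ (a : A) * ρ (Psi φ (gA a)) (κA w)
          = ((ρ (Psi φ (gA a))).comp κA) ((a : A) * w - w * (a : A)) := by
        intro a
        rw [hg_pair φ ρ hρ (gA a) (a : A) w]
        have h2 : φ (a : A) * ρ (Psi φ (gA a)) (κA w) = ρ (Psi φ (gA a)) (κA (w * (a : A))) := by
          rw [kappa_mul, hg_right φ hm ρ hρ (gA a) (κA w) (a : A)]
        rw [h2]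
        simp [map_sub]
      rw [Finset.sum_congr rfl fun a _ => hterm a] at happ
      rw [Psi_phi φ hm] at happ
      linear_combination happ
    -- limit along the inner-amenability net
    have hlim1 : Filter.Tendsto (fun w => ρ (piStar (phiT φ)) (κA w)) lA (𝓝 0) := by
      have hsum : Filter.Tendsto
          (fun w => ∑ a : ↥S, ((ρ (Psi φ (gA a))).comp κA) ((a : A) * w - w * (a : A)))
          lA (𝓝 0) := by
        have h := tendsto_finset_sum (Finset.univ : Finset ↥S)
          (fun a _ => ((((ρ (Psi φ (gA a))).comp κA).continuous.tendsto 0).comp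
            (hcommut (a : A))))
        simpa using h
      have := hsum.neg
      rw [neg_zero] at this
      exact Filter.Tendsto.congr (fun w => (hid w).symm) this
    have hconst : ∀ v : A, φ v * ρ (piStar (phiT φ)) (κA v₀)
        = φ v₀ * ρ (piStar (phiT φ)) (κA v) := by
      intro v
      rw [← eta_left φ hm ρ hρ v v₀, ← eta_right φ hm ρ hρ v₀ v]
    have h1 : Filter.Tendsto (fun v => φ v₀ * ρ (piStar (phiT φ)) (κA v)) lA (𝓝 0) := by
      have := hlim1.const_mul (φ v₀)
      simpa using this
    have h2 : Filter.Tendsto (fun v => φ v * ρ (piStar (phiT φ)) (κA v₀)) lA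
        (𝓝 (ρ (piStar (phiT φ)) (κA v₀))) := by
      have := hφ1.mul_const (ρ (piStar (phiT φ)) (κA v₀))
      simpa using this
    exact tendsto_nhds_unique (h2.congr hconst) h1
  -- conclude via the approximate biflatness limit
  have hconv0 : Filter.Tendsto (fun ρ : BilForm (Bidual A) →L[ℂ] Dual' (Bidual A) =>
      ρ (piStar (phiT φ)) (κA v₀)) lR (𝓝 (φ v₀)) := by
    have := hconv (phiT φ) (κA v₀)
    simpa using this
  have heq : (fun ρ : BilForm (Bidual A) →L[ℂ] Dual' (Bidual A) =>
      ρ (piStar (phiT φ)) (κA v₀)) =ᶠ[lR] fun _ => (0 : ℂ) :=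
    hbim.mono fun ρ h => hzero ρ h
  have hφv₀ : φ v₀ = 0 :=
    tendsto_nhds_unique (hconv0.congr' heq) tendsto_const_nhds
  rw [hφv₀] at hv₀
  rw [Complex.dist_eq] at hv₀
  norm_num at hv₀

end Aux4
section Fin

variable {A : Type*} [NonUnitalNormedRing A] [NormedSpace ℂ A]
  [IsScalarTower ℂ A A] [SMulCommClass ℂ A A]

lemma final_construction (φ : A →L[ℂ] ℂ)
    (key : ∀ (S : Finset A) (ε : ℝ), 0 < ε →
      ∃ v : A, (∀ a ∈ S, ‖a * v - φ a • v‖ ≤ ε) ∧ ‖φ v - 1‖ ≤ ε) :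
    ApproximatelyLeftPhiAmenable φ := by
  classical
  set P : Finset A × ℝ → Set A := fun p =>
    {v | (∀ a ∈ p.1, ‖a * v - φ a • v‖ ≤ p.2) ∧ ‖φ v - 1‖ ≤ p.2} with hP
  let idx := {q : Finset A × ℝ // 0 < q.2}
  haveI : Nonempty idx := ⟨⟨(∅, 1), one_pos⟩⟩
  set l : Filter A := ⨅ p : idx, Filter.principal (P p.1) with hl
  have hsub : ∀ (S₁ S₂ : Finset A) (ε₁ ε₂ : ℝ), S₁ ⊆ S₂ → ε₂ ≤ ε₁ →
      P (S₂, ε₂) ⊆ P (S₁, ε₁) := by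
    rintro S₁ S₂ ε₁ ε₂ hS hε v ⟨h1, h2⟩
    exact ⟨fun a ha => (h1 a (hS ha)).trans hε, h2.trans hε⟩
  have hdir : Directed (· ≥ ·) fun p : idx => Filter.principal (P p.1) := by
    rintro ⟨⟨S₁, ε₁⟩, h₁⟩ ⟨⟨S₂, ε₂⟩, h₂⟩
    exact ⟨⟨⟨S₁ ∪ S₂, min ε₁ ε₂⟩, lt_min h₁ h₂⟩,
      Filter.principal_mono.2 (hsub _ _ _ _ Finset.subset_union_left (min_le_left _ _)),
      Filter.principal_mono.2 (hsub _ _ _ _ Finset.subset_union_right (min_le_right _ _))⟩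
  have hne : l.NeBot := by
    refine Filter.iInf_neBot_of_directed' hdir fun p => ?_
    rw [Filter.principal_neBot_iff]
    obtain ⟨v, hv1, hv2⟩ := key p.1.1 p.1.2 p.2
    exact ⟨v, hv1, hv2⟩
  have hmem : ∀ p : idx, P p.1 ∈ l := fun p =>
    (iInf_le (fun p : idx => Filter.principal (P p.1)) p) (Filter.mem_principal_self _)
  refine ⟨l, hne, fun a => ?_, ?_⟩
  · rw [Metric.tendsto_nhds]
    intro ε hε
    filter_upwards [hmem ⟨({a}, ε / 2), half_pos hε⟩] with v hv
    have h1 := hv.1 a (Finset.mem_singleton_self a)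
    rw [dist_zero_right]
    linarith
  · rw [Metric.tendsto_nhds]
    intro ε hε
    filter_upwards [hmem ⟨(∅, ε / 2), half_pos hε⟩] with v hv
    have h2 : ‖φ v - 1‖ ≤ ε / 2 := hv.2
    rw [Complex.dist_eq]
    linarith

end Fin

/-- Let `A` be a Banach algebra, `φ` a character on `A`, and suppose `A` is
approximately `φ`-inner amenable.  If the second dual `A**` (with the first Arens product) is
approximately biflat, then `A` is approximately left `φ`-amenable. -/
theorem statement2 (A : Type*) [NonUnitalNormedRing A] [NormedSpace ℂ A]
    [IsScalarTower ℂ A A] [SMulCommClass ℂ A A] [CompleteSpace A]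
    (φ : A →L[ℂ] ℂ) (hφ : IsCharacter φ)
    (hinner : ApproximatelyPhiInnerAmenable φ)
    (hbiflat : ApproximatelyBiflat (Bidual A)) :
    ApproximatelyLeftPhiAmenable φ := by
  obtain ⟨hne, hm⟩ := hφ
  exact final_construction φ (fun S ε hε => key_step φ hm hinner hbiflat S ε hε)

end ApproxBiflat
end
end

section
/- Let A be a Banach algebra, φ a character on A, and suppose A is approximately φ-inner amenable. If A is approximately biflat, then A is approximately left φ-amenable. -/
set_option synthInstance.maxHeartbeats 1000000
set_option maxHeartbeats 4000000
set_option maxSynthPendingDepth 3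
set_option linter.unusedSectionVars false
set_option linter.unusedVariables false
open scoped Topology
open Filter ContinuousLinearMap

noncomputable section

namespace ApproxBiflat

section SeparationAux

open Filter

/-- Hahn–Banach separation of a point from (the closure of) a submodule. -/
lemma exists_separating_functional {E : Type*} [NormedAddCommGroup E] [NormedSpace ℂ E]
    (V : Submodule ℂ E) (x : E) (hx : x ∉ closure (V : Set E)) :
    ∃ lam : E →L[ℂ] ℂ, lam x = 1 ∧ ∀ w ∈ V, lam w = 0 := by
  set W := V.topologicalClosure with hW
  haveI : IsClosed (W : Set E) := V.isClosed_topologicalClosure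
  have hxW : (W.mkQ x : E ⧸ W) ≠ 0 := by
    rw [Submodule.mkQ_apply, ne_eq, Submodule.Quotient.mk_eq_zero]
    intro h
    rw [hW] at h
    rw [← Submodule.topologicalClosure_coe] at hx
    exact hx h
  obtain ⟨g, _, hg2⟩ := exists_dual_vector ℂ _ (norm_ne_zero_iff.2 hxW)
  let mkC : E →L[ℂ] (E ⧸ W) := ⟨W.mkQ, W.isOpenQuotientMap_mkQ.continuous⟩
  have hmkC : ∀ y : E, mkC y = W.mkQ y := fun _ => rfl
  refine ⟨(‖W.mkQ x‖ : ℂ)⁻¹ • (g.comp mkC), ?_, ?_⟩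
  · have hnz : ((‖W.mkQ x‖ : ℝ) : ℂ) ≠ 0 := by
      exact_mod_cast norm_ne_zero_iff.2 hxW
    simp only [ContinuousLinearMap.smul_apply, ContinuousLinearMap.comp_apply, hmkC]
    rw [hg2, smul_eq_mul]
    exact inv_mul_cancel₀ hnz
  · intro w hw
    have h0 : W.mkQ w = 0 := by
      rw [Submodule.mkQ_apply, Submodule.Quotient.mk_eq_zero]
      exact V.le_topologicalClosure hw
    simp only [ContinuousLinearMap.smul_apply, ContinuousLinearMap.comp_apply, hmkC]
    rw [h0, map_zero, smul_zero]

lemma half_norm_aux {z : ℂ} (h : ‖z - 1‖ < 1 / 2) : 1 / 2 ≤ ‖z‖ := by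
  have h1 : ‖(1 : ℂ)‖ - ‖z‖ ≤ ‖(1 : ℂ) - z‖ := norm_sub_norm_le _ _
  rw [norm_one, norm_sub_rev] at h1
  linarith

end SeparationAux

section Statement3Aux

open Filter

variable {A : Type*} [NonUnitalNormedRing A] [NormedSpace ℂ A]
  [IsScalarTower ℂ A A] [SMulCommClass ℂ A A]

lemma IsCharacter.exists_one {φ : A →L[ℂ] ℂ} (hφ : IsCharacter φ) : ∃ b : A, φ b = 1 := by
  have hex : ∃ x : A, φ x ≠ 0 := by
    by_contra h
    push_neg at h
    exact hφ.1 (by ext x; simpa using h x)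
  obtain ⟨x, hx⟩ := hex
  refine ⟨(φ x)⁻¹ • x, ?_⟩
  rw [map_smul, smul_eq_mul, inv_mul_cancel₀ hx]

lemma eigen_aux {φ : A →L[ℂ] ℂ} (hφ : IsCharacter φ)
    {ρ : BilForm A →L[ℂ] Dual' A} (hρ : IsBimodMorphism ρ)
    {b₀ : A} (hb : φ b₀ = 1) (x : A) :
    ρ (piStar φ) x = φ x * ρ (piStar φ) b₀ := by
  have h1 : ∀ a : A, bilLeft a (piStar φ) = φ a • piStar φ := by
    intro a; ext b c
    simp only [bilLeft_apply, piStar_apply, ContinuousLinearMap.smul_apply, smul_eq_mul, hφ.2]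
    ring
  have h2 : ∀ a : A, bilRight a (piStar φ) = φ a • piStar φ := by
    intro a; ext b c
    simp only [bilRight_apply, piStar_apply, ContinuousLinearMap.smul_apply, smul_eq_mul, hφ.2]
    ring
  have e1 : ρ (piStar φ) (x * b₀) = ρ (piStar φ) x := by
    have h : ρ (bilLeft b₀ (piStar φ)) x = dualLeft b₀ (ρ (piStar φ)) x := by
      rw [(hρ b₀ (piStar φ)).1]
    rw [h1 b₀, hb, one_smul] at h
    simpa [dualLeft_apply] using h.symm
  have e2 : ρ (piStar φ) (x * b₀) = φ x * ρ (piStar φ) b₀ := by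
    have h : ρ (bilRight x (piStar φ)) b₀ = dualRight x (ρ (piStar φ)) b₀ := by
      rw [(hρ x (piStar φ)).2]
    rw [h2 x, map_smul] at h
    simpa [dualRight_apply, smul_eq_mul] using h.symm
  rw [← e1]; exact e2

/-- The evaluation functional `f ↦ ρ(f ⊗ φ)(v)`, as a linear map on `A*`. -/
def PsiAux (ρ : BilForm A →L[ℂ] Dual' A) (φ : Dual' A) (v : A) :
    Dual' A →ₗ[ℂ] ℂ where
  toFun f := ρ (f.smulRight φ) v
  map_add' f g := by
    have h : (f + g).smulRight φ = f.smulRight φ + g.smulRight φ := by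
      ext b c
      simp [ContinuousLinearMap.smulRight_apply, add_mul]
    rw [h, map_add]
    rfl
  map_smul' c f := by
    have h : (c • f).smulRight φ = c • f.smulRight φ := by
      ext b c'
      simp [ContinuousLinearMap.smulRight_apply, smul_eq_mul, mul_assoc]
    rw [h, map_smul]
    rfl

@[simp] lemma PsiAux_apply (ρ : BilForm A →L[ℂ] Dual' A) (φ : Dual' A) (v : A) (f : Dual' A) :
    PsiAux ρ φ v f = ρ (f.smulRight φ) v := rfl

lemma key_aux {φ : A →L[ℂ] ℂ} (hφ : IsCharacter φ)
    (hinner : ApproximatelyPhiInnerAmenable φ)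
    (hbiflat : ApproximatelyBiflat A)
    (F : Finset A) {ε : ℝ} (hε : 0 < ε) :
    ∃ u : A, (∀ a ∈ F, ‖a * u - φ a • u‖ ≤ ε) ∧ ‖φ u - 1‖ ≤ ε := by
  classical
  by_contra hno
  push_neg at hno
  obtain ⟨b₀, hb₀⟩ := hφ.exists_one
  have hbig : ∀ u : A, φ u = 1 → ∃ a ∈ F, ε < ‖a * u - φ a • u‖ := by
    intro u hu
    by_contra hc
    push_neg at hc
    have h := hno u hc
    rw [hu, sub_self, norm_zero] at h
    linarith
  let T : A →L[ℂ] (↥F → A) :=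
    ContinuousLinearMap.pi fun a : ↥F =>
      ContinuousLinearMap.mul ℂ A a.1 - φ a.1 • ContinuousLinearMap.id ℂ A
  have hT : ∀ (u : A) (a : ↥F), T u a = a.1 * u - φ a.1 • u := fun u a => rfl
  let V : Submodule ℂ (↥F → A) := (LinearMap.ker (φ : A →ₗ[ℂ] ℂ)).map (T : A →ₗ[ℂ] (↥F → A))
  have hsep : T b₀ ∉ closure (V : Set (↥F → A)) := by
    intro hmem
    obtain ⟨w, hwV, hdist⟩ := Metric.mem_closure_iff.1 hmem ε hε
    obtain ⟨z, hz, rfl⟩ := Submodule.mem_map.1 hwV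
    have hzker : φ z = 0 := LinearMap.mem_ker.1 hz
    have hu : φ (b₀ - z) = 1 := by rw [map_sub, hb₀, hzker, sub_zero]
    obtain ⟨a, haF, ha⟩ := hbig (b₀ - z) hu
    have h1 : a * (b₀ - z) - φ a • (b₀ - z) = (T b₀ - T z) ⟨a, haF⟩ := by
      rw [← map_sub]; rfl
    have h2 : ‖(T b₀ - T z) ⟨a, haF⟩‖ ≤ ‖T b₀ - T z‖ := norm_le_pi_norm _ _
    rw [dist_eq_norm] at hdist
    rw [h1] at ha
    linarith [h2.trans hdist.le]
  obtain ⟨lam, hlam1, hlam0⟩ := exists_separating_functional V (T b₀) hsep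
  let sing : ↥F → (A →L[ℂ] (↥F → A)) := fun a =>
    ContinuousLinearMap.pi fun j => if j = a then ContinuousLinearMap.id ℂ A else 0
  have hsing : ∀ (a : ↥F) (x : A), sing a x = Pi.single a x := by
    intro a x
    funext j
    by_cases h : j = a
    · subst h
      simp [sing, ContinuousLinearMap.pi_apply, Pi.single_eq_same]
    · simp [sing, ContinuousLinearMap.pi_apply, h, Pi.single_eq_of_ne h]
  let f : ↥F → Dual' A := fun a => lam.comp (sing a)
  have hdecomp : ∀ w : ↥F → A, lam w = ∑ a : ↥F, f a (w a) := by
    intro w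
    conv_lhs => rw [← Finset.univ_sum_single w]
    rw [map_sum]
    refine Finset.sum_congr rfl fun a _ => ?_
    rw [← hsing a (w a)]
    rfl
  have hkerlam : ∀ z : A, φ z = 0 → lam (T z) = 0 := fun z hz =>
    hlam0 _ ⟨z, LinearMap.mem_ker.2 hz, rfl⟩
  have hlamT : ∀ u : A, lam (T u) = φ u := by
    intro u
    have hz : φ (u - φ u • b₀) = 0 := by
      rw [map_sub, map_smul, hb₀, smul_eq_mul, mul_one, sub_self]
    have hdec : T u = T (u - φ u • b₀) + φ u • T b₀ := by
      rw [map_sub, map_smul, sub_add_cancel]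
    rw [hdec, map_add, map_smul, hkerlam _ hz, hlam1, zero_add, smul_eq_mul, mul_one]
  have hglobal : ∀ u : A, ∑ a : ↥F, f a (a.1 * u - φ a.1 • u) = φ u := by
    intro u
    rw [← hlamT u, hdecomp (T u)]
    rfl
  obtain ⟨L, hL, hbim, htend⟩ := hbiflat
  obtain ⟨l₀, hl₀, hcomm, hphi1⟩ := hinner
  have hc : Tendsto (fun ρ : BilForm A →L[ℂ] Dual' A => ρ (piStar φ) b₀) L (𝓝 1) := by
    simpa [hb₀] using htend φ b₀
  have hev : ∀ᶠ ρ in L, IsBimodMorphism ρ ∧ ‖ρ (piStar φ) b₀ - 1‖ < 1 / 2 := by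
    refine hbim.and ?_
    have h := hc (Metric.ball_mem_nhds (1 : ℂ) (by norm_num : (0:ℝ) < 1 / 2))
    filter_upwards [h] with ρ hρ
    simpa [Metric.mem_ball, dist_eq_norm] using hρ
  obtain ⟨ρ, hρbim, hρc⟩ := hev.exists
  have hcnorm : 1 / 2 ≤ ‖ρ (piStar φ) b₀‖ := half_norm_aux hρc
  set C := ∑ a : ↥F, ‖ρ ((f a).smulRight φ)‖ with hCdef
  have hC0 : 0 ≤ C := Finset.sum_nonneg fun a _ => norm_nonneg _
  set δ := 1 / (8 * (C + 1)) with hδdef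
  have hδpos : 0 < δ := by positivity
  have hA : ∀ᶠ v in l₀, ∀ a ∈ F, ‖a * v - v * a‖ ≤ δ := by
    rw [Filter.eventually_all_finset]
    intro a _
    have h := (hcomm a) (Metric.closedBall_mem_nhds (0 : A) hδpos)
    filter_upwards [h] with v hv
    simpa [Metric.mem_closedBall, dist_zero_right] using hv
  have hB : ∀ᶠ v in l₀, 1 / 2 ≤ ‖φ v‖ := by
    have h := hphi1 (Metric.ball_mem_nhds (1 : ℂ) (by norm_num : (0:ℝ) < 1 / 2))
    filter_upwards [h] with v hv
    refine half_norm_aux ?_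
    simpa [Metric.mem_ball, dist_eq_norm] using hv
  obtain ⟨v, hv1, hv2⟩ := (hA.and hB).exists
  -- the main identity
  have hphi_eq : PsiAux ρ φ v φ = ρ (piStar φ) b₀ * φ v := by
    have h3 : φ.smulRight φ = piStar φ := by
      ext b c'
      simp only [ContinuousLinearMap.smulRight_apply, piStar_apply,
        ContinuousLinearMap.smul_apply, smul_eq_mul]
      rw [hφ.2]
    rw [PsiAux_apply, h3, eigen_aux hφ hρbim hb₀ v]
    exact mul_comm _ _
  have hterm : ∀ a : ↥F,
      PsiAux ρ φ v (dualRight a.1 (f a) - φ a.1 • f a)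
        = ρ ((f a).smulRight φ) (a.1 * v - v * a.1) := by
    intro a
    have hR1 : PsiAux ρ φ v (dualRight a.1 (f a)) = ρ ((f a).smulRight φ) (a.1 * v) := by
      have hb : (dualRight a.1 (f a)).smulRight φ = bilRight a.1 ((f a).smulRight φ) := by
        ext b c'
        rfl
      rw [PsiAux_apply, hb, (hρbim a.1 _).2]
      rfl
    have hR2 : φ a.1 • PsiAux ρ φ v (f a) = ρ ((f a).smulRight φ) (v * a.1) := by
      have hb : bilLeft a.1 ((f a).smulRight φ) = φ a.1 • ((f a).smulRight φ) := by
        ext b c'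
        simp only [bilLeft_apply, ContinuousLinearMap.smulRight_apply,
          ContinuousLinearMap.smul_apply, smul_eq_mul]
        rw [hφ.2]; ring
      have h : ρ (bilLeft a.1 ((f a).smulRight φ)) v
          = dualLeft a.1 (ρ ((f a).smulRight φ)) v := by
        rw [(hρbim a.1 _).1]
      rw [hb, map_smul] at h
      simpa [smul_eq_mul, dualLeft_apply] using h
    rw [map_sub, map_smul, hR1, hR2, ← map_sub]
  have hsum_eq : (∑ a : ↥F, (dualRight a.1 (f a) - φ a.1 • f a)) = φ := by
    ext u
    rw [← hglobal u]
    simp only [ContinuousLinearMap.coe_sum', Finset.sum_apply,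
      ContinuousLinearMap.sub_apply, ContinuousLinearMap.smul_apply,
      dualRight_apply, smul_eq_mul, map_sub, map_smul]
  have hmain : ∑ a : ↥F, ρ ((f a).smulRight φ) (a.1 * v - v * a.1)
      = ρ (piStar φ) b₀ * φ v := by
    calc ∑ a : ↥F, ρ ((f a).smulRight φ) (a.1 * v - v * a.1)
        = ∑ a : ↥F, PsiAux ρ φ v (dualRight a.1 (f a) - φ a.1 • f a) :=
          Finset.sum_congr rfl fun a _ => (hterm a).symm
      _ = PsiAux ρ φ v (∑ a : ↥F, (dualRight a.1 (f a) - φ a.1 • f a)) :=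
          (map_sum (PsiAux ρ φ v) _ _).symm
      _ = PsiAux ρ φ v φ := by rw [hsum_eq]
      _ = ρ (piStar φ) b₀ * φ v := hphi_eq
  have hlhs : ‖∑ a : ↥F, ρ ((f a).smulRight φ) (a.1 * v - v * a.1)‖ ≤ C * δ := by
    calc ‖∑ a : ↥F, ρ ((f a).smulRight φ) (a.1 * v - v * a.1)‖
        ≤ ∑ a : ↥F, ‖ρ ((f a).smulRight φ) (a.1 * v - v * a.1)‖ := norm_sum_le _ _
      _ ≤ ∑ a : ↥F, ‖ρ ((f a).smulRight φ)‖ * δ := by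
          refine Finset.sum_le_sum fun a _ => ?_
          refine (ContinuousLinearMap.le_opNorm _ _).trans ?_
          exact mul_le_mul_of_nonneg_left (hv1 a.1 a.2) (norm_nonneg _)
      _ = C * δ := by rw [← Finset.sum_mul]
  have hrhs : 1 / 4 ≤ ‖ρ (piStar φ) b₀ * φ v‖ := by
    rw [norm_mul]
    calc (1:ℝ) / 4 = (1 / 2) * (1 / 2) := by norm_num
      _ ≤ ‖ρ (piStar φ) b₀‖ * ‖φ v‖ :=
        mul_le_mul hcnorm hv2 (by norm_num) ((by norm_num : (0:ℝ) ≤ 1/2).trans hcnorm)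
  have hCδ : C * δ < 1 / 4 := by
    rw [hδdef, mul_one_div]
    rw [div_lt_div_iff₀ (by positivity) (by norm_num : (0:ℝ) < 4)]
    linarith
  rw [hmain] at hlhs
  linarith

end Statement3Aux


/-- Let `A` be a Banach algebra, `φ` a character on `A`, and suppose `A` is
approximately `φ`-inner amenable.  If `A` is approximately biflat, then `A` is approximately
left `φ`-amenable. -/
theorem statement3 (A : Type*) [NonUnitalNormedRing A] [NormedSpace ℂ A]
    [IsScalarTower ℂ A A] [SMulCommClass ℂ A A] [CompleteSpace A]
    (φ : A →L[ℂ] ℂ) (hφ : IsCharacter φ)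
    (hinner : ApproximatelyPhiInnerAmenable φ)
    (hbiflat : ApproximatelyBiflat A) :
    ApproximatelyLeftPhiAmenable φ := by
  classical
  let S : Finset A × ℕ → Set A := fun p =>
    {u | (∀ a ∈ p.1, ‖a * u - φ a • u‖ ≤ 1 / (p.2 + 1)) ∧ ‖φ u - 1‖ ≤ 1 / (p.2 + 1)}
  have hSne : ∀ p, (S p).Nonempty := by
    intro p
    have hpos : (0:ℝ) < 1 / (p.2 + 1) := by positivity
    obtain ⟨u, h1, h2⟩ := key_aux hφ hinner hbiflat p.1 hpos
    exact ⟨u, h1, h2⟩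
  have hsub : ∀ p q : Finset A × ℕ, p.1 ⊆ q.1 → p.2 ≤ q.2 → S q ⊆ S p := by
    intro p q h1 h2 u hu
    have hle : (1:ℝ) / (q.2 + 1) ≤ 1 / (p.2 + 1) := by
      apply one_div_le_one_div_of_le (by positivity)
      have h : (p.2:ℝ) ≤ q.2 := by exact_mod_cast h2
      linarith
    exact ⟨fun a ha => (hu.1 a (h1 ha)).trans hle, hu.2.trans hle⟩
  have hdir : Directed (· ≥ ·) fun p : Finset A × ℕ => (𝓟 (S p) : Filter A) := by
    intro p q
    refine ⟨(p.1 ∪ q.1, max p.2 q.2), ?_, ?_⟩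
    · exact Filter.principal_mono.2 (hsub p _ Finset.subset_union_left (le_max_left _ _))
    · exact Filter.principal_mono.2 (hsub q _ Finset.subset_union_right (le_max_right _ _))
  let l : Filter A := ⨅ p, 𝓟 (S p)
  have hne : l.NeBot := by
    refine Filter.iInf_neBot_of_directed' hdir fun p => ?_
    exact Filter.principal_neBot_iff.2 (hSne p)
  have hmem : ∀ p, S p ∈ l := fun p => Filter.le_principal_iff.1 (iInf_le _ p)
  refine ⟨l, hne, ?_, ?_⟩
  · intro a
    rw [NormedAddCommGroup.tendsto_nhds_zero]
    intro ε hε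
    obtain ⟨n, hn⟩ := exists_nat_one_div_lt hε
    filter_upwards [hmem ({a}, n)] with u hu
    exact lt_of_le_of_lt (hu.1 a (Finset.mem_singleton_self a)) hn
  · rw [Metric.tendsto_nhds]
    intro ε hε
    obtain ⟨n, hn⟩ := exists_nat_one_div_lt hε
    filter_upwards [hmem (∅, n)] with u hu
    rw [dist_eq_norm]
    exact lt_of_le_of_lt hu.2 hn


end ApproxBiflat
end
end

section
/- Let A, B be Banach algebras, X a Banach A,B-module, φ ∈ Δ(B), and ψ_φ ∈ Δ(Tri(A,X,B)) the character ψ_φ([[a,x],[0,b]]) = φ(b). If the closed ideal I = Tri(0,X,B) of T = Tri(A,X,B) is left ψ_φ|_I-amenable, then there is a bounded net (x_α) in X and (b_α) in B with φ(b_α) = 1, x·b_α − φ(b)·x_α → 0 and b·b_α − φ(b)·b_α → 0 for all x ∈ X and b ∈ B. -/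
set_option synthInstance.maxHeartbeats 1000000
set_option maxHeartbeats 4000000
set_option maxSynthPendingDepth 3
set_option linter.unusedSectionVars false
set_option linter.unusedVariables false
open scoped Topology
open Filter ContinuousLinearMap

noncomputable section

namespace ApproxBiflat

/-- A Banach `A, B`-module `X`: a Banach space with a contractive left `A`-action and a
contractive right `B`-action that commute. -/
class BanachBimodule (A B X : Type*)
    [NonUnitalNormedRing A] [NormedSpace ℂ A]
    [NonUnitalNormedRing B] [NormedSpace ℂ B]
    [NormedAddCommGroup X] [NormedSpace ℂ X] where
  lsmul : A →L[ℂ] X →L[ℂ] X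
  rsmul : B →L[ℂ] X →L[ℂ] X
  lsmul_mul : ∀ (a a' : A) (x : X), lsmul (a * a') x = lsmul a (lsmul a' x)
  rsmul_mul : ∀ (b b' : B) (x : X), rsmul (b * b') x = rsmul b' (rsmul b x)
  lsmul_rsmul : ∀ (a : A) (b : B) (x : X), lsmul a (rsmul b x) = rsmul b (lsmul a x)
  norm_lsmul_le : ∀ (a : A) (x : X), ‖lsmul a x‖ ≤ ‖a‖ * ‖x‖
  norm_rsmul_le : ∀ (b : B) (x : X), ‖rsmul b x‖ ≤ ‖b‖ * ‖x‖

section BimodAbbrev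

variable (A B X : Type*)
  [NonUnitalNormedRing A] [NormedSpace ℂ A]
  [NonUnitalNormedRing B] [NormedSpace ℂ B]
  [NormedAddCommGroup X] [NormedSpace ℂ X] [BanachBimodule A B X]

/-- The left action of `A` on the Banach `A,B`-module `X`. -/
noncomputable def lAct : A →L[ℂ] X →L[ℂ] X := BanachBimodule.lsmul B

/-- The right action of `B` on the Banach `A,B`-module `X`. -/
noncomputable def rAct : B →L[ℂ] X →L[ℂ] X := BanachBimodule.rsmul A

end BimodAbbrev

/-- The triangular Banach algebra `Tri(A, X, B)` of matrices `[[a, x], [0, b]]`,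
with norm `‖a‖ + ‖x‖ + ‖b‖`. -/
@[ext]
structure Tri (A X B : Type*) where
  a : A
  x : X
  b : B

namespace Tri

variable {A B X : Type*}
  [NonUnitalNormedRing A] [NormedSpace ℂ A] [IsScalarTower ℂ A A] [SMulCommClass ℂ A A]
  [NonUnitalNormedRing B] [NormedSpace ℂ B] [IsScalarTower ℂ B B] [SMulCommClass ℂ B B]
  [NormedAddCommGroup X] [NormedSpace ℂ X]

instance : Add (Tri A X B) := ⟨fun s t => ⟨s.a + t.a, s.x + t.x, s.b + t.b⟩⟩
instance : Zero (Tri A X B) := ⟨⟨0, 0, 0⟩⟩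
instance : Neg (Tri A X B) := ⟨fun t => ⟨-t.a, -t.x, -t.b⟩⟩
instance : SMul ℂ (Tri A X B) := ⟨fun c t => ⟨c • t.a, c • t.x, c • t.b⟩⟩

@[simp] lemma add_a (s t : Tri A X B) : (s + t).a = s.a + t.a := rfl
@[simp] lemma add_x (s t : Tri A X B) : (s + t).x = s.x + t.x := rfl
@[simp] lemma add_b (s t : Tri A X B) : (s + t).b = s.b + t.b := rfl
@[simp] lemma zero_a : (0 : Tri A X B).a = 0 := rfl
@[simp] lemma zero_x : (0 : Tri A X B).x = 0 := rfl
@[simp] lemma zero_b : (0 : Tri A X B).b = 0 := rfl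
@[simp] lemma neg_a (t : Tri A X B) : (-t).a = -t.a := rfl
@[simp] lemma neg_x (t : Tri A X B) : (-t).x = -t.x := rfl
@[simp] lemma neg_b (t : Tri A X B) : (-t).b = -t.b := rfl
@[simp] lemma smul_a (c : ℂ) (t : Tri A X B) : (c • t).a = c • t.a := rfl
@[simp] lemma smul_x (c : ℂ) (t : Tri A X B) : (c • t).x = c • t.x := rfl
@[simp] lemma smul_b (c : ℂ) (t : Tri A X B) : (c • t).b = c • t.b := rfl

instance : AddCommGroup (Tri A X B) where
  add_assoc s t u := by ext <;> simp [add_assoc]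
  zero_add t := by ext <;> simp
  add_zero t := by ext <;> simp
  neg_add_cancel t := by ext <;> simp
  add_comm s t := by ext <;> simp [add_comm]
  nsmul := nsmulRec
  zsmul := zsmulRec

instance : Module ℂ (Tri A X B) where
  one_smul t := by ext <;> simp
  mul_smul c d t := by ext <;> simp [mul_smul]
  smul_zero c := by ext <;> simp
  smul_add c s t := by ext <;> simp
  add_smul c d t := by ext <;> simp [add_smul]
  zero_smul t := by ext <;> simp

noncomputable instance : NormedAddCommGroup (Tri A X B) :=
  AddGroupNorm.toNormedAddCommGroup
    { toFun := fun t => ‖t.a‖ + ‖t.x‖ + ‖t.b‖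
      map_zero' := by simp
      add_le' := fun s t => by
        have h1 := norm_add_le s.a t.a
        have h2 := norm_add_le s.x t.x
        have h3 := norm_add_le s.b t.b
        simp only [add_a, add_x, add_b]
        linarith
      neg' := fun t => by simp
      eq_zero_of_map_eq_zero' := fun t h => by
        have h' : ‖t.a‖ + ‖t.x‖ + ‖t.b‖ = 0 := h
        have h1 : ‖t.a‖ = 0 := by
          nlinarith [norm_nonneg t.a, norm_nonneg t.x, norm_nonneg t.b]
        have h2 : ‖t.x‖ = 0 := by
          nlinarith [norm_nonneg t.a, norm_nonneg t.x, norm_nonneg t.b]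
        have h3 : ‖t.b‖ = 0 := by
          nlinarith [norm_nonneg t.a, norm_nonneg t.x, norm_nonneg t.b]
        ext
        · exact norm_eq_zero.1 h1
        · exact norm_eq_zero.1 h2
        · exact norm_eq_zero.1 h3 }

lemma norm_def (t : Tri A X B) : ‖t‖ = ‖t.a‖ + ‖t.x‖ + ‖t.b‖ := rfl

noncomputable instance : NormedSpace ℂ (Tri A X B) where
  norm_smul_le c t := by
    rw [norm_def, norm_def]
    simp only [smul_a, smul_x, smul_b, norm_smul]
    exact le_of_eq (by ring)

section Mul

variable [BanachBimodule A B X]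

instance : Mul (Tri A X B) :=
  ⟨fun s t => ⟨s.a * t.a, lAct A B X s.a t.x + rAct A B X t.b s.x, s.b * t.b⟩⟩

@[simp] lemma mul_a (s t : Tri A X B) : (s * t).a = s.a * t.a := rfl
@[simp] lemma mul_x (s t : Tri A X B) :
    (s * t).x = lAct A B X s.a t.x + rAct A B X t.b s.x := rfl
@[simp] lemma mul_b (s t : Tri A X B) : (s * t).b = s.b * t.b := rfl

private lemma lAct_mul (a a' : A) (x : X) :
    lAct A B X (a * a') x = lAct A B X a (lAct A B X a' x) :=
  BanachBimodule.lsmul_mul (A := A) (B := B) (X := X) a a' x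
private lemma rAct_mul (b b' : B) (x : X) :
    rAct A B X (b * b') x = rAct A B X b' (rAct A B X b x) :=
  BanachBimodule.rsmul_mul (A := A) (B := B) (X := X) b b' x
private lemma lAct_rAct (a : A) (b : B) (x : X) :
    lAct A B X a (rAct A B X b x) = rAct A B X b (lAct A B X a x) :=
  BanachBimodule.lsmul_rsmul (A := A) (B := B) (X := X) a b x

instance : NonUnitalRing (Tri A X B) where
  left_distrib s t u := by
    ext <;> simp [mul_add, map_add] <;> try abel
  right_distrib s t u := by
    ext <;> simp [add_mul, map_add, ContinuousLinearMap.add_apply] <;> try abel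
  zero_mul t := by ext <;> simp
  mul_zero t := by ext <;> simp
  mul_assoc s t u := by
    ext
    · simp [mul_assoc]
    · simp only [mul_x, mul_a, mul_b, map_add, ContinuousLinearMap.add_apply,
        lAct_mul, rAct_mul, lAct_rAct]
      abel
    · simp [mul_assoc]

noncomputable instance : NonUnitalNormedRing (Tri A X B) :=
  { (inferInstance : NormedAddCommGroup (Tri A X B)),
    (inferInstance : NonUnitalRing (Tri A X B)) with
    norm_mul_le := fun s t => by
      rw [norm_def, norm_def, norm_def]
      simp only [mul_a, mul_x, mul_b]
      have h1 := norm_mul_le s.a t.a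
      have h2 := norm_mul_le s.b t.b
      have h3 := norm_add_le (lAct A B X s.a t.x) (rAct A B X t.b s.x)
      have h4 : ‖lAct A B X s.a t.x‖ ≤ ‖s.a‖ * ‖t.x‖ :=
        BanachBimodule.norm_lsmul_le (A := A) (B := B) (X := X) s.a t.x
      have h5 : ‖rAct A B X t.b s.x‖ ≤ ‖t.b‖ * ‖s.x‖ :=
        BanachBimodule.norm_rsmul_le (A := A) (B := B) (X := X) t.b s.x
      have n1 := norm_nonneg s.a; have n2 := norm_nonneg s.x; have n3 := norm_nonneg s.b
      have n4 := norm_nonneg t.a; have n5 := norm_nonneg t.x; have n6 := norm_nonneg t.b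
      nlinarith }

instance : IsScalarTower ℂ (Tri A X B) (Tri A X B) :=
  ⟨fun c s t => by
    show (c • s) * t = c • (s * t)
    ext
    · simp [smul_mul_assoc]
    · simp [map_smul, smul_add]
    · simp [smul_mul_assoc]⟩

instance : SMulCommClass ℂ (Tri A X B) (Tri A X B) :=
  ⟨fun c s t => by
    show c • (s * t) = s * (c • t)
    ext
    · simp [mul_smul_comm]
    · simp [map_smul, smul_add]
    · simp [mul_smul_comm]⟩

end Mul

/-- The projection `Tri(A,X,B) → B` as a continuous linear map. -/
noncomputable def projB : Tri A X B →L[ℂ] B :=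
  LinearMap.mkContinuous
    { toFun := fun t => t.b
      map_add' := fun _ _ => rfl
      map_smul' := fun _ _ => rfl } 1
    (fun t => by
      show ‖t.b‖ ≤ 1 * ‖t‖
      rw [one_mul, norm_def]
      have := norm_nonneg t.a; have := norm_nonneg t.x
      linarith)

@[simp] lemma projB_apply (t : Tri A X B) : projB t = t.b := rfl

end Tri

/-- The character `ψ_φ` on `Tri(A,X,B)` induced by a character `φ` on `B`:
`ψ_φ [[a,x],[0,b]] = φ b`. -/
noncomputable def triCharacter {A B X : Type*}
    [NonUnitalNormedRing A] [NormedSpace ℂ A] [IsScalarTower ℂ A A] [SMulCommClass ℂ A A]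
    [NonUnitalNormedRing B] [NormedSpace ℂ B] [IsScalarTower ℂ B B] [SMulCommClass ℂ B B]
    [NormedAddCommGroup X] [NormedSpace ℂ X]
    (φ : B →L[ℂ] ℂ) : Tri A X B →L[ℂ] ℂ :=
  φ.comp Tri.projB

end ApproxBiflat
namespace ApproxBiflat

open Filter
open scoped Topology

/-- The closed ideal `I = Tri(0, X, B)` of `Tri(A, X, B)`, realized as the triangular algebra
`Tri(0, X, B)` over the zero Banach algebra `0 = PUnit`, where `X` carries the zero left
`0`-action and the given right `B`-action. -/
noncomputable def idealBimodule (A B X : Type*)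
    [NonUnitalNormedRing A] [NormedSpace ℂ A]
    [NonUnitalNormedRing B] [NormedSpace ℂ B]
    [NormedAddCommGroup X] [NormedSpace ℂ X] [BanachBimodule A B X] :
    BanachBimodule PUnit B X where
  lsmul := 0
  rsmul := BanachBimodule.rsmul A
  lsmul_mul := by intros; simp
  rsmul_mul := by
    intro b b' x
    exact BanachBimodule.rsmul_mul (A := A) (B := B) (X := X) b b' x
  lsmul_rsmul := by intros; simp
  norm_lsmul_le := by intro a x; simp
  norm_rsmul_le := by
    intro b x
    exact BanachBimodule.norm_rsmul_le (A := A) (B := B) (X := X) b x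

section KeyLemma

variable {I : Type*} [NonUnitalNormedRing I] [NormedSpace ℂ I]
  [IsScalarTower ℂ I I] [SMulCommClass ℂ I I]

open Metric in
/-- From a left `ψ`-amenability witness `m ∈ I**` we extract, for any finite set `F` and
`ε > 0`, an approximate witness in `I` (Hahn–Banach separation argument). -/
lemma key_approx (ψ : I →L[ℂ] ℂ) (m : Bidual I)
    (hm : ∀ t : I, m.comp (dualRight t) = ψ t • m) (hm1 : m ψ = 1)
    (F : Finset I) (ε : ℝ) (hε : 0 < ε) :
    ∃ u : I, ‖u‖ ≤ ‖m‖ + 1 ∧ ‖ψ u - 1‖ ≤ ε ∧ ∀ t ∈ F, ‖t * u - ψ t • u‖ ≤ ε := by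
  classical
  set R : ℝ := ‖m‖ + 1 with hRdef
  have hR : (0:ℝ) < R := by positivity
  set Mt : I → (I →L[ℂ] I) :=
    fun t => ContinuousLinearMap.mul ℂ I t - ψ t • ContinuousLinearMap.id ℂ I with hMtdef
  have hMt : ∀ (t u : I), Mt t u = t * u - ψ t • u := by
    intro t u
    simp [hMtdef]
  set L : I →L[ℂ] ((F → I) × ℂ) :=
    (ContinuousLinearMap.pi (fun t : F => Mt (t : I))).prod ψ with hLdef
  set D : Set ((F → I) × ℂ) := L '' (closedBall (0 : I) R) with hDdef
  have hmain : ((0 : F → I), (1 : ℂ)) ∈ closure D := by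
    by_contra hcl
    have hDconv : Convex ℝ (closure D) := by
      have h1 : Convex ℝ (closedBall (0:I) R) := convex_closedBall 0 R
      have h2 := h1.linear_image ((L.restrictScalars ℝ).toLinearMap)
      have h3 : Convex ℝ D := by
        have : ⇑(L.restrictScalars ℝ).toLinearMap = ⇑L := rfl
        rwa [this] at h2
      exact h3.closure
    obtain ⟨g, s, hs1, hs2⟩ := RCLike.geometric_hahn_banach_closed_point (𝕜 := ℂ)
      hDconv isClosed_closure hcl
    have hmem : ∀ u : I, ‖u‖ ≤ R → L u ∈ closure D :=
      fun u hu => subset_closure ⟨u, mem_closedBall_zero_iff.2 hu, rfl⟩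
    have hspos : (0:ℝ) < s := by
      have := hs1 (L 0) (hmem 0 (by simpa using hR.le))
      simpa using this
    -- bound `|g (L u)| ≤ s` on the ball of radius `R`
    have hub : ∀ u : I, ‖u‖ ≤ R → ‖g (L u)‖ ≤ s := by
      intro u hu
      rcases eq_or_ne (g (L u)) 0 with h0 | h0
      · simp [h0, hspos.le]
      · set c : ℂ := (‖g (L u)‖ : ℂ) / (g (L u)) with hc
        have hcn : ‖c‖ = 1 := by
          simp only [hc, norm_div, Complex.norm_real, Real.norm_eq_abs, abs_norm]
          exact div_self (norm_ne_zero_iff.2 h0)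
        have hcu : ‖c • u‖ ≤ R := by rw [norm_smul, hcn, one_mul]; exact hu
        have hlt := hs1 (L (c • u)) (hmem _ hcu)
        have hval : g (L (c • u)) = (‖g (L u)‖ : ℂ) := by
          rw [map_smul, map_smul, smul_eq_mul, hc, div_mul_cancel₀ _ h0]
        rw [hval] at hlt
        simpa using hlt.le
    -- hence `‖g ∘ L‖ ≤ s / R`
    have hnorm : ‖g.comp L‖ ≤ s / R := by
      refine ContinuousLinearMap.opNorm_le_bound _ (div_nonneg hspos.le hR.le) (fun u => ?_)
      rcases eq_or_ne u 0 with rfl | h0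
      · simp
      · have hu : (0:ℝ) < ‖u‖ := norm_pos_iff.2 h0
        have h1 := hub (((R / ‖u‖ : ℝ) : ℂ) • u) (by
          rw [norm_smul, Complex.norm_real, Real.norm_eq_abs,
            abs_of_pos (div_pos hR hu), div_mul_cancel₀ _ hu.ne'])
        rw [map_smul, map_smul, norm_smul, Complex.norm_real, Real.norm_eq_abs,
          abs_of_pos (div_pos hR hu)] at h1
        have h2 : R * ‖g (L u)‖ ≤ s * ‖u‖ := by
          rw [div_mul_eq_mul_div] at h1
          exact (div_le_iff₀ hu).mp h1
        have h3 : ‖(g.comp L) u‖ = ‖g (L u)‖ := rfl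
        rw [h3, div_mul_eq_mul_div, le_div_iff₀ hR]
        nlinarith
    -- decompose `g ∘ L`
    set sing : F → (I →L[ℂ] (F → I)) := fun t =>
      ContinuousLinearMap.pi (fun s => if s = t then ContinuousLinearMap.id ℂ I else 0) with hsing
    set Gt : F → (Dual' I) := fun t =>
      g.comp ((ContinuousLinearMap.inl ℂ (F → I) ℂ).comp (sing t)) with hGt
    set γ : ℂ := g ((0 : F → I), 1) with hγdef
    have hexp : g.comp L
        = (∑ t : F, ((dualRight (t:I)) (Gt t) - ψ (t:I) • Gt t)) + γ • ψ := by
      ext u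
      have h1 : L u = (ContinuousLinearMap.inl ℂ (F → I) ℂ)
            (∑ t : F, (sing t) ((Mt (t:I)) u)) + (ψ u) • ((0 : F → I), (1:ℂ)) := by
        have hfst : (fun t : F => (Mt (t:I)) u) = ∑ t : F, (sing t) ((Mt (t:I)) u) := by
          funext s
          rw [Finset.sum_apply]
          have : ∀ t : F, (sing t) ((Mt (t:I)) u) s
              = if s = t then (Mt (s:I)) u else 0 := by
            intro t
            simp only [hsing, ContinuousLinearMap.pi_apply]
            by_cases h : s = t <;> simp [h]
          simp_rw [this]
          simp
        have hpair : (ContinuousLinearMap.inl ℂ (F → I) ℂ)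
            (∑ t : F, (sing t) ((Mt (t:I)) u))
            = ((∑ t : F, (sing t) ((Mt (t:I)) u)), (0:ℂ)) := rfl
        rw [hpair]
        apply Prod.ext
        · show (fun t : F => (Mt (t:I)) u)
            = (∑ t : F, (sing t) ((Mt (t:I)) u)) + ψ u • (0 : F → I)
          rw [smul_zero, add_zero]
          exact hfst
        · show ψ u = 0 + ψ u • (1:ℂ)
          rw [smul_eq_mul, mul_one, zero_add]
      have h2 : g (L u) = (∑ t : F, Gt t ((Mt (t:I)) u)) + ψ u * γ := by
        rw [h1, map_add, map_smul, smul_eq_mul, ← hγdef, map_sum, map_sum]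
        simp [hGt]
      simp only [ContinuousLinearMap.comp_apply, ContinuousLinearMap.add_apply,
        ContinuousLinearMap.sum_apply, ContinuousLinearMap.smul_apply,
        ContinuousLinearMap.sub_apply, dualRight_apply, smul_eq_mul]
      rw [h2, mul_comm]
      congr 1
      refine Finset.sum_congr rfl (fun t _ => ?_)
      rw [hMt, map_sub, map_smul, smul_eq_mul]
    have hmh : m (g.comp L) = γ := by
      rw [hexp, map_add, map_sum, map_smul]
      have hz : ∀ t : F, m ((dualRight (t:I)) (Gt t) - ψ (t:I) • Gt t) = 0 := by
        intro t
        have h := ContinuousLinearMap.ext_iff.mp (hm (t:I)) (Gt t)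
        simp only [ContinuousLinearMap.comp_apply, ContinuousLinearMap.smul_apply] at h
        rw [map_sub, map_smul, h, sub_self]
      simp [hz, hm1, smul_eq_mul]
    have hγnorm : ‖γ‖ ≤ ‖m‖ * (s / R) := by
      rw [← hmh]
      exact le_trans (m.le_opNorm _) (mul_le_mul_of_nonneg_left hnorm (norm_nonneg m))
    have hγre : s < RCLike.re γ := hs2
    have hre : RCLike.re γ ≤ ‖γ‖ := RCLike.re_le_norm γ
    have hlt : s < ‖m‖ * (s / R) := lt_of_lt_of_le (lt_of_lt_of_le hγre hre) hγnorm
    rw [mul_div_assoc'] at hlt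
    rw [lt_div_iff₀ hR] at hlt
    nlinarith
  rw [Metric.mem_closure_iff] at hmain
  obtain ⟨y, hy, hdist⟩ := hmain ε hε
  obtain ⟨u, hu, rfl⟩ := hy
  refine ⟨u, mem_closedBall_zero_iff.mp hu, ?_, ?_⟩
  · have h2 : dist (1:ℂ) ((L u).2) < ε := by
      rw [Prod.dist_eq] at hdist
      exact lt_of_le_of_lt (le_max_right _ _) hdist
    have : (L u).2 = ψ u := rfl
    rw [this] at h2
    rw [← dist_eq_norm, dist_comm]
    exact h2.le
  · intro t ht
    have h1 : dist ((0 : F → I)) ((L u).1) < ε := by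
      rw [Prod.dist_eq] at hdist
      exact lt_of_le_of_lt (le_max_left _ _) hdist
    have h2 : dist ((0 : F → I) ⟨t, ht⟩) ((L u).1 ⟨t, ht⟩) ≤ dist ((0 : F → I)) ((L u).1) :=
      dist_le_pi_dist _ _ _
    have h3 : (L u).1 ⟨t, ht⟩ = t * u - ψ t • u := by
      have : (L u).1 ⟨t, ht⟩ = Mt t u := rfl
      rw [this, hMt]
    rw [h3] at h2
    simp only [Pi.zero_apply, dist_zero_left] at h2 h1
    exact le_of_lt (lt_of_le_of_lt h2 h1)

/-- Normalized version of `key_approx`: we can take `ψ u = 1` exactly. -/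
lemma key_approx' (ψ : I →L[ℂ] ℂ) (m : Bidual I)
    (hm : ∀ t : I, m.comp (dualRight t) = ψ t • m) (hm1 : m ψ = 1)
    (F : Finset I) (ε : ℝ) (hε : 0 < ε) :
    ∃ u : I, ‖u‖ ≤ 2 * (‖m‖ + 1) ∧ ψ u = 1 ∧ ∀ t ∈ F, ‖t * u - ψ t • u‖ ≤ ε := by
  have hε2 : (0:ℝ) < min (ε/2) (1/2) := lt_min (by positivity) (by norm_num)
  obtain ⟨u₀, hu₀, hψu₀, hF⟩ := key_approx ψ m hm hm1 F _ hε2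
  have h1 : ‖ψ u₀ - 1‖ ≤ 1/2 := le_trans hψu₀ (min_le_right _ _)
  have h2 : (1:ℝ)/2 ≤ ‖ψ u₀‖ := by
    have h := norm_sub_norm_le (1:ℂ) (1 - ψ u₀)
    simp only [norm_one, sub_sub_cancel] at h
    rw [norm_sub_rev] at h
    linarith
  have hne : ψ u₀ ≠ 0 := by
    intro h; rw [h, norm_zero] at h2; linarith
  refine ⟨(ψ u₀)⁻¹ • u₀, ?_, ?_, ?_⟩
  · rw [norm_smul, norm_inv]
    have hinv : ‖ψ u₀‖⁻¹ ≤ 2 := by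
      rw [inv_le_comm₀ (lt_of_lt_of_le (by norm_num) h2) (by norm_num)]
      linarith
    exact mul_le_mul hinv hu₀ (norm_nonneg _) (by norm_num)
  · rw [map_smul, smul_eq_mul, inv_mul_cancel₀ hne]
  · intro t ht
    have hcomm : t * ((ψ u₀)⁻¹ • u₀) - ψ t • ((ψ u₀)⁻¹ • u₀)
        = (ψ u₀)⁻¹ • (t * u₀ - ψ t • u₀) := by
      rw [mul_smul_comm, smul_sub, smul_comm]
    rw [hcomm, norm_smul, norm_inv]
    have hinv : ‖ψ u₀‖⁻¹ ≤ 2 := by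
      rw [inv_le_comm₀ (lt_of_lt_of_le (by norm_num) h2) (by norm_num)]
      linarith
    have hF' : ‖t * u₀ - ψ t • u₀‖ ≤ ε/2 := le_trans (hF t ht) (min_le_left _ _)
    calc ‖ψ u₀‖⁻¹ * ‖t * u₀ - ψ t • u₀‖ ≤ 2 * (ε/2) :=
          mul_le_mul hinv hF' (norm_nonneg _) (by norm_num)
      _ = ε := by ring

end KeyLemma

/-- Let `A, B` be Banach algebras, `X` a Banach `A,B`-module, `φ ∈ Δ(B)`,
and `ψ_φ ∈ Δ(Tri(A,X,B))` the character `ψ_φ [[a,x],[0,b]] = φ(b)`.  If the closed ideal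
`I = Tri(0,X,B)` of `T = Tri(A,X,B)` is left `ψ_φ|_I`-amenable, then there are a bounded net
`(x_α)` in `X` and a bounded net `(b_α)` in `B` with `φ(b_α) = 1`,
`x · b_α - φ(b) · x_α → 0` and `b · b_α - φ(b) · b_α → 0` for all `x ∈ X` and `b ∈ B`. -/
theorem statement16 (A B X : Type*)
    [NonUnitalNormedRing A] [NormedSpace ℂ A] [IsScalarTower ℂ A A] [SMulCommClass ℂ A A]
    [CompleteSpace A]
    [NonUnitalNormedRing B] [NormedSpace ℂ B] [IsScalarTower ℂ B B] [SMulCommClass ℂ B B]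
    [CompleteSpace B]
    [NormedAddCommGroup X] [NormedSpace ℂ X] [CompleteSpace X]
    [BanachBimodule A B X]
    (φ : B →L[ℂ] ℂ) (hφ : IsCharacter φ)
    (hamen :
      letI : BanachBimodule PUnit B X := idealBimodule A B X
      LeftPhiAmenable (triCharacter (A := PUnit) (X := X) φ)) :
    ∃ l : Filter (X × B), l.NeBot ∧
      (∃ C : ℝ, ∀ᶠ p in l, ‖p.1‖ ≤ C ∧ ‖p.2‖ ≤ C) ∧
      (∀ᶠ p in l, φ p.2 = 1) ∧
      (∀ (x : X) (b : B),
        Tendsto (fun p : X × B => rAct A B X p.2 x - φ b • p.1) l (𝓝 0)) ∧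
      (∀ b : B, Tendsto (fun p : X × B => b * p.2 - φ b • p.2) l (𝓝 0)) := by
  classical
  letI : BanachBimodule PUnit B X := idealBimodule A B X
  obtain ⟨m, hm, hm1⟩ := hamen
  set ψ : Tri PUnit X B →L[ℂ] ℂ := triCharacter φ with hψdef
  set C : ℝ := 2 * (‖m‖ + 1) with hCdef
  set S : Finset (Tri PUnit X B) × {e : ℝ // 0 < e} → Set (Tri PUnit X B) :=
    fun p => {u | ‖u‖ ≤ C ∧ ψ u = 1 ∧ ∀ t ∈ p.1, ‖t * u - ψ t • u‖ ≤ (p.2 : ℝ)} with hSdef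
  have hSne : ∀ p, (S p).Nonempty := by
    rintro ⟨F, ε, hε⟩
    obtain ⟨u, h1, h2, h3⟩ := key_approx' ψ m hm hm1 F ε hε
    exact ⟨u, h1, h2, h3⟩
  set l' : Filter (Tri PUnit X B) := ⨅ p, 𝓟 (S p) with hl'def
  have hdir : Directed (· ≥ ·) (fun p => 𝓟 (S p)) := by
    rintro ⟨F₁, ε₁⟩ ⟨F₂, ε₂⟩
    refine ⟨(F₁ ∪ F₂, ⟨min (ε₁ : ℝ) (ε₂ : ℝ), lt_min ε₁.2 ε₂.2⟩), ?_, ?_⟩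
    · exact Filter.principal_mono.mpr fun u hu =>
        ⟨hu.1, hu.2.1, fun t ht =>
          (hu.2.2 t (Finset.mem_union_left _ ht)).trans (min_le_left _ _)⟩
    · exact Filter.principal_mono.mpr fun u hu =>
        ⟨hu.1, hu.2.1, fun t ht =>
          (hu.2.2 t (Finset.mem_union_right _ ht)).trans (min_le_right _ _)⟩
  haveI hne : l'.NeBot :=
    Filter.iInf_neBot_of_directed hdir (fun p => Filter.principal_neBot_iff.mpr (hSne p))
  have hev : ∀ p, ∀ᶠ u in l', u ∈ S p := fun p => Filter.le_principal_iff.mp (iInf_le _ p)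
  obtain ⟨b₁, hb₁⟩ : ∃ b, φ b ≠ 0 := by
    by_contra h
    push_neg at h
    exact hφ.1 (ContinuousLinearMap.ext fun b => by simp [h b])
  set b₀ : B := (φ b₁)⁻¹ • b₁ with hb₀def
  have hφb₀ : φ b₀ = 1 := by
    rw [hb₀def, map_smul, smul_eq_mul, inv_mul_cancel₀ hb₁]
  have hψ_eq : ∀ u : Tri PUnit X B, ψ u = φ u.b := fun _ => rfl
  have hsubx : ∀ v w : Tri PUnit X B, (v - w).x = v.x - w.x := fun v w => by
    rw [sub_eq_add_neg, Tri.add_x, Tri.neg_x, ← sub_eq_add_neg]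
  have hsubb : ∀ v w : Tri PUnit X B, (v - w).b = v.b - w.b := fun v w => by
    rw [sub_eq_add_neg, Tri.add_b, Tri.neg_b, ← sub_eq_add_neg]
  have hnormx : ∀ v : Tri PUnit X B, ‖v.x‖ ≤ ‖v‖ := by
    intro v
    rw [Tri.norm_def]
    have := norm_nonneg v.a; have := norm_nonneg v.b
    linarith
  have hnormb : ∀ v : Tri PUnit X B, ‖v.b‖ ≤ ‖v‖ := by
    intro v
    rw [Tri.norm_def]
    have := norm_nonneg v.a; have := norm_nonneg v.x
    linarith
  refine ⟨l'.map (fun u => (u.x, u.b)), Filter.map_neBot, ⟨C, ?_⟩, ?_, ?_, ?_⟩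
  · rw [Filter.eventually_map]
    filter_upwards [hev (∅, ⟨1, one_pos⟩)] with u hu
    exact ⟨(hnormx u).trans hu.1, (hnormb u).trans hu.1⟩
  · rw [Filter.eventually_map]
    filter_upwards [hev (∅, ⟨1, one_pos⟩)] with u hu
    exact hu.2.1
  · intro x b
    rw [Filter.tendsto_map'_iff]
    rw [NormedAddCommGroup.tendsto_nhds_zero]
    intro δ hδ
    set t : Tri PUnit X B := ⟨PUnit.unit, x, φ b • b₀⟩ with htdef
    have hψt : ψ t = φ b := by
      rw [hψ_eq, htdef]
      show φ (φ b • b₀) = φ b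
      rw [map_smul, smul_eq_mul, hφb₀, mul_one]
    filter_upwards [hev ({t}, ⟨δ/2, by positivity⟩)] with u hu
    have h3 := hu.2.2 t (Finset.mem_singleton_self t)
    have hcompx : (t * u - ψ t • u).x = rAct A B X u.b x - φ b • u.x := by
      rw [hψt, hsubx, Tri.smul_x, Tri.mul_x]
      have h0 : lAct PUnit B X t.a u.x = 0 := by
        show ((idealBimodule A B X).lsmul t.a) u.x = 0
        rw [show (idealBimodule A B X).lsmul = 0 from rfl]
        simp
      have h1 : rAct PUnit B X u.b t.x = rAct A B X u.b x := rfl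
      rw [h0, h1, zero_add]
    have hb : ‖rAct A B X u.b x - φ b • u.x‖ ≤ δ/2 := by
      rw [← hcompx]
      exact (hnormx _).trans h3
    show ‖rAct A B X u.b x - φ b • u.x‖ < δ
    linarith
  · intro b
    rw [Filter.tendsto_map'_iff]
    rw [NormedAddCommGroup.tendsto_nhds_zero]
    intro δ hδ
    set t : Tri PUnit X B := ⟨PUnit.unit, 0, b⟩ with htdef
    have hψt : ψ t = φ b := rfl
    filter_upwards [hev ({t}, ⟨δ/2, by positivity⟩)] with u hu
    have h3 := hu.2.2 t (Finset.mem_singleton_self t)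
    have hcompb : (t * u - ψ t • u).b = b * u.b - φ b • u.b := by
      rw [hψt, hsubb, Tri.smul_b, Tri.mul_b]
    have hb : ‖b * u.b - φ b • u.b‖ ≤ δ/2 := by
      rw [← hcompb]
      exact (hnormb _).trans h3
    show ‖b * u.b - φ b • u.b‖ < δ
    linarith

end ApproxBiflat
end
end
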